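/- Let R ⊂ S be an integral FCP extension. The following are equivalent: (1) R is u-closed in S; (2) the map Spec(S) → Spec(R), Q ↦ Q ∩ R, is injective; (3) the seminormalization of R in S equals the t-closure of R in S. -/

import Mathlib

/-- An extension `R ⊆ S` has FCP if every chain of intermediate `R`-subalgebras of `S`
is finite. -/
def Algebra.HasFCP (R S : Type*) [CommRing R] [CommRing S] [Algebra R S] : Prop :=
  ∀ C : Set (Subalgebra R S), IsChain (· ≤ ·) C → C.Finite

section Closures

variable {A B : Type*} [CommRing A] [CommRing B] [Algebra A B]

/-- `T` is seminormal in `B` if every `b ∈ B` with `b², b³ ∈ T` lies in `T`. -/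
def IsSeminormalIn (T : Subalgebra A B) : Prop :=
  ∀ b : B, b ^ 2 ∈ T → b ^ 3 ∈ T → b ∈ T

/-- `T` is t-closed in `B` if every `b ∈ B` with `b² − rb ∈ T` and `b³ − rb² ∈ T` for some
`r ∈ T` lies in `T`. -/
def IsTClosedIn (T : Subalgebra A B) : Prop :=
  ∀ b : B, (∃ r ∈ T, b ^ 2 - r * b ∈ T ∧ b ^ 3 - r * b ^ 2 ∈ T) → b ∈ T

/-- `T` is u-closed in `B` if every `b ∈ B` with `b² − b ∈ T` and `b³ − b² ∈ T` lies in `T`. -/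
def IsUClosedIn (T : Subalgebra A B) : Prop :=
  ∀ b : B, b ^ 2 - b ∈ T → b ^ 3 - b ^ 2 ∈ T → b ∈ T

end Closures


section Aux
variable {R S : Type*} [CommRing R] [CommRing S] [Algebra R S]

/-- FCP gives maximal elements in any nonempty family of subalgebras. -/
lemma HasFCP.exists_max
    (hFCP : ∀ C : Set (Subalgebra R S), IsChain (· ≤ ·) C → C.Finite)
    {s : Set (Subalgebra R S)} (hs : s.Nonempty) :
    ∃ m ∈ s, ∀ z ∈ s, m ≤ z → z = m := by
  obtain ⟨x, hx⟩ := hs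
  have ih : ∀ c ⊆ s, IsChain (· ≤ ·) c → ∀ y ∈ c, ∃ ub ∈ s, ∀ z ∈ c, z ≤ ub := by
    intro c hcs hc y hy
    have hfin : c.Finite := hFCP c hc
    have hne : (hfin.toFinset).Nonempty := by
      simp only [Set.Finite.toFinset_nonempty]; exact ⟨y, hy⟩
    obtain ⟨ub, hub, hmax⟩ := hfin.toFinset.exists_maximal hne
    rw [Set.Finite.mem_toFinset] at hub
    refine ⟨ub, hcs hub, fun z hz => ?_⟩
    rcases hc.total hz hub with h | h
    · exact h
    · by_contra hzu
      exact hzu (hmax (hfin.mem_toFinset.mpr hz) h)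
  obtain ⟨m, -, hm⟩ := zorn_le_nonempty₀ s ih x hx
  exact ⟨m, hm.1, fun z hz hmz => le_antisymm (hm.2 hz hmz) hmz⟩
end Aux


lemma newton_idem {B : Type*} [CommRing B] :
    ∀ (k : ℕ) (x : B), (x ^ 2 - x) ^ k = 0 →
      ∃ e : B, e * e = e ∧ e - x ∈ Ideal.span {x ^ 2 - x} := by
  intro k
  induction k using Nat.strong_induction_on with
  | _ k ih =>
    intro x hx
    match k, hx with
    | 0, hx =>
      have h1 : (1 : B) = 0 := by simpa using hx
      haveI : Subsingleton B := subsingleton_of_zero_eq_one h1.symm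
      refine ⟨x, Subsingleton.elim _ _, ?_⟩
      have h2 : x - x = 0 := sub_self x
      rw [h2]
      exact (Ideal.span {x ^ 2 - x}).zero_mem
    | 1, hx =>
      have h1 : x ^ 2 - x = 0 := by simpa using hx
      refine ⟨x, ?_, by simpa using (Ideal.span {x ^ 2 - x}).zero_mem⟩
      have : x * x - x = x ^ 2 - x := by ring
      rw [← sub_eq_zero, this, h1]
    | (n+2), hx =>
      set z := x ^ 2 - x with hz
      set x' := 3 * x ^ 2 - 2 * x ^ 3 with hx'
      have hz' : x' ^ 2 - x' = z ^ 2 * ((2 * x - 3) * (2 * x + 1)) := by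
        rw [hx', hz]; ring
      have hz'pow : (x' ^ 2 - x') ^ (n + 1) = 0 := by
        rw [hz', mul_pow, ← pow_mul]
        have h2 : 2 * (n + 1) = (n + 2) + n := by ring
        rw [h2, pow_add, hx, zero_mul, zero_mul]
      obtain ⟨e, he, hmem⟩ := ih (n + 1) (by omega) x' hz'pow
      refine ⟨e, he, ?_⟩
      have hle : Ideal.span {x' ^ 2 - x'} ≤ Ideal.span ({z} : Set B) := by
        rw [Ideal.span_singleton_le_span_singleton]
        exact ⟨z * ((2 * x - 3) * (2 * x + 1)), by rw [hz']; ring⟩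
      have h1 : e - x' ∈ Ideal.span ({z} : Set B) := hle hmem
      have h2 : x' - x ∈ Ideal.span ({z} : Set B) := by
        rw [Ideal.mem_span_singleton]
        exact ⟨-(2 * x - 1), by rw [hx', hz]; ring⟩
      have : e - x = (e - x') + (x' - x) := by ring
      rw [this]
      exact Ideal.add_mem _ h1 h2


section Core
variable {A B : Type*} [CommRing A] [CommRing B] [Algebra A B]

lemma core_lemma (hinj : Function.Injective (algebraMap A B)) [Algebra.IsIntegral A B]
    (hspec : ∀ Q₁ Q₂ : Ideal B, Q₁.IsPrime → Q₂.IsPrime →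
      Q₁.comap (algebraMap A B) = Q₂.comap (algebraMap A B) → Q₁ = Q₂)
    (b : B) (r u v : A)
    (hu : algebraMap A B u = b ^ 2 - algebraMap A B r * b)
    (hv : algebraMap A B v = b ^ 3 - algebraMap A B r * b ^ 2) :
    ∃ (n : ℕ) (a : A), algebraMap A B (r ^ n) * b = algebraMap A B a := by
  set f := algebraMap A B with hf
  have hb2 : b ^ 2 = f r * b + f u := by rw [hu]; ring
  let J : Ideal A :=
    { carrier := {t : A | ∃ a : A, f t * b = f a}
      add_mem' := by
        rintro x y ⟨a, ha⟩ ⟨a', ha'⟩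
        exact ⟨a + a', by rw [map_add, map_add, add_mul, ha, ha']⟩
      zero_mem' := ⟨0, by simp⟩
      smul_mem' := by
        rintro c x ⟨a, ha⟩
        exact ⟨c * a, by rw [smul_eq_mul, map_mul, map_mul, mul_assoc, ha]⟩ }
  have hmemJ : ∀ t : A, (∃ a : A, f t * b = f a) → t ∈ J := fun _ h => h
  have huJ : u ∈ J := hmemJ u ⟨v, by rw [hu, hv]; ring⟩
  have key : ∀ p : Ideal A, p.IsPrime → J ≤ p → r ∈ p := by
    intro p hp hJp
    by_contra hr
    have hker : Ideal.comap f ⊥ ≤ p := by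
      intro x hx
      have hx0 : f x = 0 := hx
      have : x = 0 := hinj (by rw [hx0, map_zero])
      rw [this]; exact p.zero_mem
    obtain ⟨Q₀, -, hQ₀p, hQ₀c⟩ := Ideal.exists_ideal_over_prime_of_isIntegral p ⊥ hker
    have hup : u ∈ p := hJp huJ
    -- the subring A[b]
    let A' : Subalgebra A B :=
      { carrier := {x : B | ∃ t₀ t₁ : A, x = f t₀ + f t₁ * b}
        mul_mem' := by
          rintro x y ⟨t₀, t₁, rfl⟩ ⟨s₀, s₁, rfl⟩
          exact ⟨t₀ * s₀ + t₁ * s₁ * u, t₀ * s₁ + t₁ * s₀ + t₁ * s₁ * r, by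
            simp only [map_add, map_mul]
            linear_combination (f t₁ * f s₁) * hb2⟩
        add_mem' := by
          rintro x y ⟨t₀, t₁, rfl⟩ ⟨s₀, s₁, rfl⟩
          exact ⟨t₀ + s₀, t₁ + s₁, by simp only [map_add]; ring⟩
        one_mem' := ⟨1, 0, by simp⟩
        zero_mem' := ⟨0, 0, by simp⟩
        algebraMap_mem' := fun a => ⟨a, 0, by simp; rfl⟩ }
    set g := algebraMap A ↥A' with hg
    have hcoe : ∀ a : A, ((g a : ↥A') : B) = f a := fun a => rfl
    let β : ↥A' := ⟨b, ⟨0, 1, by simp⟩⟩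
    -- coordinates of elements of p.map g
    have hmap : ∀ ξ ∈ p.map g, ∃ c₀ c₁ : A, c₀ ∈ p ∧ c₁ ∈ p ∧
        (ξ : B) = f c₀ + f c₁ * b := by
      intro ξ hξ
      have hξ' : ξ ∈ Ideal.span (g '' (p : Set A)) := hξ
      refine Submodule.span_induction ?_ ?_ ?_ ?_ hξ'
      · rintro x ⟨t, ht, rfl⟩
        exact ⟨t, 0, ht, p.zero_mem, by rw [hcoe, map_zero, zero_mul, add_zero]⟩
      · exact ⟨0, 0, p.zero_mem, p.zero_mem, by simp⟩
      · rintro x y - - ⟨c₀, c₁, h₀, h₁, hx⟩ ⟨d₀, d₁, k₀, k₁, hy⟩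
        refine ⟨c₀ + d₀, c₁ + d₁, p.add_mem h₀ k₀, p.add_mem h₁ k₁, ?_⟩
        have : ((x + y : ↥A') : B) = (x : B) + (y : B) := rfl
        rw [this, hx, hy, map_add, map_add]; ring
      · rintro η x - ⟨c₀, c₁, h₀, h₁, hx⟩
        obtain ⟨s₀, s₁, hη⟩ := η.2
        refine ⟨s₀ * c₀ + s₁ * c₁ * u, s₀ * c₁ + s₁ * c₀ + s₁ * c₁ * r,
          p.add_mem (p.mul_mem_left _ h₀) (Ideal.mul_mem_right _ _ (p.mul_mem_left _ h₁)),
          p.add_mem (p.add_mem (p.mul_mem_left _ h₁) (p.mul_mem_left _ h₀))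
            (Ideal.mul_mem_right _ _ (p.mul_mem_left _ h₁)), ?_⟩
        rw [smul_eq_mul]
        have hsm : ((η * x : ↥A') : B) = (η : B) * (x : B) := rfl
        rw [hsm, hη, hx]
        simp only [map_add, map_mul]
        linear_combination (f s₁ * f c₁) * hb2
    -- the multiplicative set, image of the complement of p
    let Mp : Submonoid ↥A' := Submonoid.map (g : A →* ↥A') p.primeCompl
    -- first ideal : generated by p and b
    have hd₁ : Disjoint ((p.map g ⊔ Ideal.span {β} : Ideal ↥A') : Set ↥A') (Mp : Set ↥A') := by
      rw [Set.disjoint_right]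
      rintro x ⟨w, hw, rfl⟩ hxI
      obtain ⟨ξ, hξ, ζ, hζ, hsum⟩ := Submodule.mem_sup.mp hxI
      obtain ⟨η, hη⟩ := Ideal.mem_span_singleton'.mp hζ
      obtain ⟨c₀, c₁, h₀, h₁, hξB⟩ := hmap ξ hξ
      obtain ⟨s₀, s₁, hηB⟩ := η.2
      have hB : f w = f c₀ + f c₁ * b + (f s₀ + f s₁ * b) * b := by
        have h1 : ((ξ + η * β : ↥A') : B) = f w := by rw [hη, hsum]; exact hcoe w
        have h2 : ((ξ + η * β : ↥A') : B) = (ξ : B) + (η : B) * b := rfl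
        rw [h2, hξB, hηB] at h1
        linear_combination -h1
      have hθ : c₁ + s₀ + s₁ * r ∈ J := hmemJ _ ⟨w - c₀ - s₁ * u, by
        simp only [map_add, map_sub, map_mul]
        linear_combination -hB - f s₁ * hb2⟩
      have hθp : c₁ + s₀ + s₁ * r ∈ p := hJp hθ
      have hdp : w - c₀ - s₁ * u ∈ p := by
        have h3 : f (c₁ + s₀ + s₁ * r) ∈ Q₀ := by
          rw [← hQ₀c] at hθp; exact hθp
        have h4 : f (w - c₀ - s₁ * u) ∈ Q₀ := by
          have : f (w - c₀ - s₁ * u) = f (c₁ + s₀ + s₁ * r) * b := by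
            simp only [map_add, map_sub, map_mul]
            linear_combination hB + f s₁ * hb2
          rw [this]; exact Ideal.mul_mem_right _ _ h3
        rw [← hQ₀c]; exact h4
      have : w ∈ p := by
        have := p.add_mem (p.add_mem hdp h₀) (p.mul_mem_left s₁ hup)
        have heq : w - c₀ - s₁ * u + c₀ + s₁ * u = w := by ring
        rwa [heq] at this
      exact hw this
    -- second ideal : generated by p and b - f r
    have hd₂ : Disjoint ((p.map g ⊔ Ideal.span {β - g r} : Ideal ↥A') : Set ↥A')
        (Mp : Set ↥A') := by
      rw [Set.disjoint_right]
      rintro x ⟨w, hw, rfl⟩ hxI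
      obtain ⟨ξ, hξ, ζ, hζ, hsum⟩ := Submodule.mem_sup.mp hxI
      obtain ⟨η, hη⟩ := Ideal.mem_span_singleton'.mp hζ
      obtain ⟨c₀, c₁, h₀, h₁, hξB⟩ := hmap ξ hξ
      obtain ⟨s₀, s₁, hηB⟩ := η.2
      have hB : f w = f c₀ + f c₁ * b + (f s₀ + f s₁ * b) * (b - f r) := by
        have h1 : ((ξ + η * (β - g r) : ↥A') : B) = f w := by rw [hη, hsum]; exact hcoe w
        have h2 : ((ξ + η * (β - g r) : ↥A') : B) = (ξ : B) + (η : B) * (b - f r) := rfl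
        rw [h2, hξB, hηB] at h1
        linear_combination -h1
      have hθ : c₁ + s₀ ∈ J := hmemJ _ ⟨w - c₀ + s₀ * r - s₁ * u, by
        simp only [map_add, map_sub, map_mul]
        linear_combination -hB - f s₁ * hb2⟩
      have hθp : c₁ + s₀ ∈ p := hJp hθ
      have hs₀p : s₀ ∈ p := by
        have := p.sub_mem hθp h₁
        have heq : c₁ + s₀ - c₁ = s₀ := by ring
        rwa [heq] at this
      have hdp : w - c₀ + s₀ * r - s₁ * u ∈ p := by
        have h3 : f (c₁ + s₀) ∈ Q₀ := by rw [← hQ₀c] at hθp; exact hθp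
        have h4 : f (w - c₀ + s₀ * r - s₁ * u) ∈ Q₀ := by
          have : f (w - c₀ + s₀ * r - s₁ * u) = f (c₁ + s₀) * b := by
            simp only [map_add, map_sub, map_mul]
            linear_combination hB + f s₁ * hb2
          rw [this]; exact Ideal.mul_mem_right _ _ h3
        rw [← hQ₀c]; exact h4
      have : w ∈ p := by
        have := p.add_mem (p.sub_mem (p.add_mem hdp h₀) (p.mul_mem_right r hs₀p))
          (p.mul_mem_left s₁ hup)
        have heq : w - c₀ + s₀ * r - s₁ * u + c₀ - s₀ * r + s₁ * u = w := by ring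
        rwa [heq] at this
      exact hw this
    -- primes of A' over p containing b, resp. b - f r
    obtain ⟨𝔭₁, h𝔭₁p, h𝔭₁le, h𝔭₁d⟩ := Ideal.exists_le_prime_disjoint _ Mp hd₁
    obtain ⟨𝔭₂, h𝔭₂p, h𝔭₂le, h𝔭₂d⟩ := Ideal.exists_le_prime_disjoint _ Mp hd₂
    have hcomap : ∀ (𝔭 : Ideal ↥A'), (p.map g ≤ 𝔭) → Disjoint (𝔭 : Set ↥A') (Mp : Set ↥A') →
        𝔭.comap g = p := by
      intro 𝔭 hle hd
      apply le_antisymm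
      · intro t ht
        by_contra htp
        exact Set.disjoint_left.mp hd ht ⟨t, htp, rfl⟩
      · intro t ht
        exact hle (Ideal.mem_map_of_mem g ht)
    have hc₁ : 𝔭₁.comap g = p := hcomap 𝔭₁ (le_trans le_sup_left h𝔭₁le) h𝔭₁d
    have hc₂ : 𝔭₂.comap g = p := hcomap 𝔭₂ (le_trans le_sup_left h𝔭₂le) h𝔭₂d
    -- lift to primes of B
    haveI : Algebra.IsIntegral ↥A' B :=
      ⟨fun x => (Algebra.IsIntegral.isIntegral (R := A) x).tower_top⟩
    have hkerA' : ∀ 𝔭 : Ideal ↥A', Ideal.comap (algebraMap ↥A' B) ⊥ ≤ 𝔭 := by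
      intro 𝔭 x hx
      have hx0 : (x : B) = 0 := hx
      have : x = 0 := Subtype.ext hx0
      rw [this]; exact 𝔭.zero_mem
    obtain ⟨Q₁, -, hQ₁p, hQ₁c⟩ :=
      Ideal.exists_ideal_over_prime_of_isIntegral 𝔭₁ ⊥ (hkerA' 𝔭₁)
    obtain ⟨Q₂, -, hQ₂p, hQ₂c⟩ :=
      Ideal.exists_ideal_over_prime_of_isIntegral 𝔭₂ ⊥ (hkerA' 𝔭₂)
    have hbQ₁ : b ∈ Q₁ := by
      have hβ : β ∈ 𝔭₁ := h𝔭₁le (Ideal.mem_sup_right (Ideal.subset_span rfl))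
      rw [← hQ₁c] at hβ
      exact hβ
    have hbQ₂ : b - f r ∈ Q₂ := by
      have hβ : β - g r ∈ 𝔭₂ := h𝔭₂le (Ideal.mem_sup_right (Ideal.subset_span rfl))
      rw [← hQ₂c] at hβ
      exact hβ
    have hcomapA : ∀ (Q : Ideal B) (𝔭 : Ideal ↥A'), Q.comap (algebraMap ↥A' B) = 𝔭 →
        𝔭.comap g = p → Q.comap f = p := by
      intro Q 𝔭 h1 h2
      rw [hf, IsScalarTower.algebraMap_eq A ↥A' B, ← Ideal.comap_comap, h1, h2]
    have hQQ : Q₁ = Q₂ := hspec Q₁ Q₂ hQ₁p hQ₂p (by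
      rw [hcomapA Q₁ 𝔭₁ hQ₁c hc₁, hcomapA Q₂ 𝔭₂ hQ₂c hc₂])
    have hfr : f r ∈ Q₁ := by
      have : f r = b - (b - f r) := by ring
      rw [this]
      exact Q₁.sub_mem hbQ₁ (hQQ ▸ hbQ₂)
    have : r ∈ p := by
      rw [← hcomapA Q₁ 𝔭₁ hQ₁c hc₁]
      exact hfr
    exact hr this
  have hrad : r ∈ J.radical := by
    rw [Ideal.radical_eq_sInf]
    exact Submodule.mem_sInf.mpr fun p hp => key p hp.2 hp.1
  obtain ⟨n, hn⟩ := Ideal.mem_radical_iff.mp hrad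
  obtain ⟨a, ha⟩ := hn
  exact ⟨n, a, ha⟩

end Core

section Closure2
variable {R S : Type*} [CommRing R] [CommRing S] [Algebra R S]

lemma IsTClosedIn.seminormal {T : Subalgebra R S} (h : IsTClosedIn T) : IsSeminormalIn T := by
  intro b h2 h3
  refine h b ⟨0, T.zero_mem, ?_, ?_⟩ <;> simpa

lemma sInf_sn_le_sInf_tc :
    sInf {T : Subalgebra R S | IsSeminormalIn T} ≤ sInf {T : Subalgebra R S | IsTClosedIn T} :=
  sInf_le_sInf fun _ h => h.seminormal

lemma sInf_sn_seminormal :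
    IsSeminormalIn (sInf {T : Subalgebra R S | IsSeminormalIn T}) := by
  intro b h2 h3
  rw [Algebra.mem_sInf] at h2 h3 ⊢
  exact fun T hT => hT b (h2 T hT) (h3 T hT)

/-- descend powers of `r` through a seminormal subalgebra -/
lemma sn_descend {T : Subalgebra R S} (hT : IsSeminormalIn T) {b r : S} (hr : r ∈ T)
    (h2 : b ^ 2 - r * b ∈ T) (h3 : b ^ 3 - r * b ^ 2 ∈ T) :
    ∀ n : ℕ, r ^ n * b ∈ T → b ∈ T := by
  intro n
  induction n with
  | zero => intro h; simpa using h
  | succ k ih =>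
    intro h
    apply ih
    apply hT (r ^ k * b)
    · have he : (r ^ k * b) ^ 2 = r ^ (2 * k) * (b ^ 2 - r * b) + r ^ k * (r ^ (k + 1) * b) := by
        ring
      rw [he]
      exact T.add_mem (T.mul_mem (T.pow_mem hr _) h2) (T.mul_mem (T.pow_mem hr _) h)
    · have he : (r ^ k * b) ^ 3 = r ^ (3 * k) * (b ^ 3 - r * b ^ 2) +
          r ^ (3 * k + 1) * (b ^ 2 - r * b) + r ^ (2 * k + 1) * (r ^ (k + 1) * b) := by
        ring
      rw [he]
      exact T.add_mem (T.add_mem (T.mul_mem (T.pow_mem hr _) h3)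
        (T.mul_mem (T.pow_mem hr _) h2)) (T.mul_mem (T.pow_mem hr _) h)

/-- Spec-injectivity (ideal form) in terms of the base `R`, transferred to a subalgebra `T`. -/
lemma hspec_transfer (T : Subalgebra R S)
    (hspec : ∀ Q₁ Q₂ : Ideal S, Q₁.IsPrime → Q₂.IsPrime →
      Q₁.comap (algebraMap R S) = Q₂.comap (algebraMap R S) → Q₁ = Q₂) :
    ∀ Q₁ Q₂ : Ideal S, Q₁.IsPrime → Q₂.IsPrime →
      Q₁.comap (algebraMap ↥T S) = Q₂.comap (algebraMap ↥T S) → Q₁ = Q₂ := by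
  intro Q₁ Q₂ h1 h2 hc
  apply hspec Q₁ Q₂ h1 h2
  rw [IsScalarTower.algebraMap_eq R ↥T S, ← Ideal.comap_comap, ← Ideal.comap_comap, hc]

/-- (2) ⟹ (1) : if Spec is injective then `R` is u-closed in `S`. -/
lemma uclosed_of_spec (hinj : Function.Injective (algebraMap R S)) [Algebra.IsIntegral R S]
    (hspec : ∀ Q₁ Q₂ : Ideal S, Q₁.IsPrime → Q₂.IsPrime →
      Q₁.comap (algebraMap R S) = Q₂.comap (algebraMap R S) → Q₁ = Q₂) :
    IsUClosedIn (⊥ : Subalgebra R S) := by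
  intro b h2 h3
  rw [Algebra.mem_bot] at h2 h3 ⊢
  obtain ⟨u, hu⟩ := h2
  obtain ⟨v, hv⟩ := h3
  obtain ⟨n, a, ha⟩ := core_lemma hinj hspec b 1 u v (by rw [hu, map_one]; ring)
    (by rw [hv, map_one]; ring)
  exact ⟨a, by simpa using ha.symm⟩

/-- (2) ⟹ (3) : if Spec is injective then the seminormalization is t-closed. -/
lemma sn_tclosed_of_spec (hinj : Function.Injective (algebraMap R S)) [Algebra.IsIntegral R S]
    (hspec : ∀ Q₁ Q₂ : Ideal S, Q₁.IsPrime → Q₂.IsPrime →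
      Q₁.comap (algebraMap R S) = Q₂.comap (algebraMap R S) → Q₁ = Q₂) :
    IsTClosedIn (sInf {T : Subalgebra R S | IsSeminormalIn T}) := by
  set T := sInf {T : Subalgebra R S | IsSeminormalIn T} with hTdef
  intro b hb
  obtain ⟨r, hrT, h2, h3⟩ := hb
  haveI : Algebra.IsIntegral ↥T S :=
    ⟨fun x => (Algebra.IsIntegral.isIntegral (R := R) x).tower_top⟩
  have hinj' : Function.Injective (algebraMap ↥T S) := Subtype.val_injective
  obtain ⟨n, a, ha⟩ := core_lemma hinj' (hspec_transfer T hspec) b ⟨r, hrT⟩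
    ⟨b ^ 2 - r * b, h2⟩ ⟨b ^ 3 - r * b ^ 2, h3⟩ rfl rfl
  have ha' : r ^ n * b = (a : S) := by
    have : ((algebraMap ↥T S) (⟨r, hrT⟩ ^ n : ↥T)) = r ^ n := by
      push_cast
      rfl
    rw [← this]
    exact ha
  refine sn_descend sInf_sn_seminormal hrT h2 h3 n ?_
  rw [ha']
  exact a.2

end Closure2

section PartTwo
variable {R S : Type*} [CommRing R] [CommRing S] [Algebra R S]

/-- The conductor of `R` in `S` (as an ideal of `R`). -/
def condIdeal (R S : Type*) [CommRing R] [CommRing S] [Algebra R S] : Ideal R where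
  carrier := {r : R | ∀ s : S, algebraMap R S r * s ∈ (⊥ : Subalgebra R S)}
  add_mem' := fun hx hy s => by
    rw [map_add, add_mul]; exact add_mem (hx s) (hy s)
  zero_mem' := fun s => by rw [map_zero, zero_mul]; exact zero_mem _
  smul_mem' := fun c x hx s => by
    rw [smul_eq_mul, map_mul, mul_assoc]
    exact mul_mem (Subalgebra.algebraMap_mem _ c) (hx s)

/-- The extension of the conductor to `S`. -/
def condS (R S : Type*) [CommRing R] [CommRing S] [Algebra R S] : Ideal S :=
  (condIdeal R S).map (algebraMap R S)

lemma condS_absorb : ∀ x ∈ condS R S, ∀ s : S, s * x ∈ (⊥ : Subalgebra R S) := by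
  intro x hx
  have hx' : x ∈ Ideal.span ((algebraMap R S) '' (condIdeal R S : Set R)) := hx
  refine Submodule.span_induction ?_ ?_ ?_ ?_ hx'
  · rintro y ⟨t, ht, rfl⟩ s
    rw [mul_comm]
    exact ht s
  · intro s; rw [mul_zero]; exact zero_mem _
  · intro y z _ _ hy hz s
    rw [mul_add]; exact add_mem (hy s) (hz s)
  · intro c y _ hy s
    rw [smul_eq_mul, ← mul_assoc]
    exact hy (s * c)

lemma condS_le_bot : ∀ x ∈ condS R S, x ∈ (⊥ : Subalgebra R S) := by
  intro x hx
  have := condS_absorb x hx 1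
  rwa [one_mul] at this

/-- If two distinct primes of `S` lie over the same prime of `R`,
then the conductor is contained in that prime. -/
lemma cond_le_comap {Q₁ Q₂ : Ideal S} (h₁ : Q₁.IsPrime) (h₂ : Q₂.IsPrime)
    (hc : Q₁.comap (algebraMap R S) = Q₂.comap (algebraMap R S)) (hne : Q₁ ≠ Q₂) :
    condIdeal R S ≤ Q₁.comap (algebraMap R S) := by
  intro r hr
  by_contra hrP
  have key : ∀ Qa Qb : Ideal S, Qa.IsPrime → Qb.IsPrime →
      Qa.comap (algebraMap R S) = Qb.comap (algebraMap R S) →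
      r ∉ Qb.comap (algebraMap R S) → Qa ≤ Qb := by
    intro Qa Qb ha hb hab hrb s hs
    obtain ⟨t, ht⟩ := Algebra.mem_bot.mp (hr s)
    have htQa : algebraMap R S t ∈ Qa := by rw [ht]; exact Qa.mul_mem_left _ hs
    have : t ∈ Qa.comap (algebraMap R S) := htQa
    rw [hab] at this
    have htQb : algebraMap R S r * s ∈ Qb := by rw [← ht]; exact this
    rcases hb.mem_or_mem htQb with h | h
    · exact absurd h hrb
    · exact h
  have h12 : Q₁ ≤ Q₂ := key Q₁ Q₂ h₁ h₂ hc (hc ▸ hrP)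
  have h21 : Q₂ ≤ Q₁ := key Q₂ Q₁ h₂ h₁ hc.symm hrP
  exact hne (le_antisymm h12 h21)

/-- FCP implies the extension is module-finite. -/
lemma finite_of_fcp
    (hFCP : ∀ C : Set (Subalgebra R S), IsChain (· ≤ ·) C → C.Finite)
    [Algebra.IsIntegral R S] : Module.Finite R S := by
  classical
  have hne : ({T : Subalgebra R S | ∃ s : Finset S, T = Algebra.adjoin R ↑s}).Nonempty :=
    ⟨⊥, ∅, by simp⟩
  obtain ⟨M, ⟨fs, hfs⟩, hmax⟩ := HasFCP.exists_max hFCP hne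
  have hM : M = ⊤ := by
    rw [Algebra.eq_top_iff]
    intro x
    by_contra hx
    have h1 : M ≤ Algebra.adjoin R ↑(insert x fs) := by
      rw [hfs]
      exact Algebra.adjoin_mono (by rw [Finset.coe_insert]; exact Set.subset_insert _ _)
    have h2 := hmax _ ⟨insert x fs, rfl⟩ h1
    apply hx
    rw [← h2]
    exact Algebra.subset_adjoin (by simp)
  haveI : Algebra.FiniteType R S := ⟨⟨fs, by rw [← hfs, hM]⟩⟩
  exact Algebra.IsIntegral.finite

/-- Products stay in `I • ⊤`. -/
lemma smul_top_absorb (I : Ideal R) {x : S} (hx : x ∈ I • (⊤ : Submodule R S)) (s : S) :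
    s * x ∈ I • (⊤ : Submodule R S) := by
  refine Submodule.smul_induction_on hx ?_ ?_
  · intro r hr n _
    rw [mul_smul_comm]
    exact Submodule.smul_mem_smul hr trivial
  · intro y z hy hz
    rw [mul_add]
    exact add_mem hy hz

/-- The subalgebra `R + I·S`. -/
def algPlus (I : Ideal R) : Subalgebra R S where
  carrier := (LinearMap.range (Algebra.linearMap R S) ⊔ I • (⊤ : Submodule R S) :
    Submodule R S)
  add_mem' := fun hx hy => add_mem hx hy
  zero_mem' := zero_mem _
  one_mem' := Submodule.mem_sup_left ⟨1, by simp⟩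
  algebraMap_mem' := fun r => Submodule.mem_sup_left ⟨r, rfl⟩
  mul_mem' := by
    intro x y hx hy
    obtain ⟨x₁, hx₁, w₁, hw₁, rfl⟩ := Submodule.mem_sup.mp hx
    obtain ⟨x₂, hx₂, w₂, hw₂, rfl⟩ := Submodule.mem_sup.mp hy
    obtain ⟨r₁, rfl⟩ := hx₁
    obtain ⟨r₂, rfl⟩ := hx₂
    have heq : (Algebra.linearMap R S r₁ + w₁) * (Algebra.linearMap R S r₂ + w₂) =
        Algebra.linearMap R S (r₁ * r₂) +
          (Algebra.linearMap R S r₁ * w₂ + Algebra.linearMap R S r₂ * w₁ + w₁ * w₂) := by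
      simp only [Algebra.linearMap_apply, map_mul]
      ring
    rw [heq]
    refine Submodule.add_mem_sup ⟨r₁ * r₂, rfl⟩ ?_
    exact add_mem (add_mem (smul_top_absorb I hw₂ _) (smul_top_absorb I hw₁ _))
      (smul_top_absorb I hw₂ w₁)

lemma algPlus_mono {I J : Ideal R} (h : I ≤ J) : (algPlus I : Subalgebra R S) ≤ algPlus J := by
  intro x hx
  have hx' : x ∈ (LinearMap.range (Algebra.linearMap R S) ⊔ I • (⊤ : Submodule R S) :
    Submodule R S) := hx
  have hle : (LinearMap.range (Algebra.linearMap R S) ⊔ I • (⊤ : Submodule R S) : Submodule R S) ≤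
      LinearMap.range (Algebra.linearMap R S) ⊔ J • ⊤ :=
    sup_le_sup_left (Submodule.smul_mono_left h) _
  exact hle hx'

/-- dim(R/conductor) = 0, by FCP. -/
lemma dim0_of_fcp
    (hFCP : ∀ C : Set (Subalgebra R S), IsChain (· ≤ ·) C → C.Finite)
    [Module.Finite R S] {p q : Ideal R}
    (hp : p.IsPrime) (hq : q.IsPrime) (hcond : condIdeal R S ≤ p) (hpq : p ≤ q) : p = q := by
  by_contra hpq'
  obtain ⟨a, haq, hap⟩ := SetLike.exists_of_lt (lt_of_le_of_ne hpq hpq')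
  set T : ℕ → Subalgebra R S := fun n => algPlus (p ⊔ Ideal.span {a ^ n}) with hT
  have hTanti : ∀ n : ℕ, T (n + 1) ≤ T n := by
    intro n
    apply algPlus_mono
    apply sup_le_sup_left
    rw [Ideal.span_singleton_le_span_singleton]
    exact ⟨a, pow_succ a n⟩
  have hTanti' : ∀ m n : ℕ, m ≤ n → T n ≤ T m := by
    intro m n h
    induction n with
    | zero => rw [Nat.le_zero.mp h]
    | succ k ih =>
      rcases Nat.lt_or_ge m (k+1) with h' | h'
      · exact le_trans (hTanti k) (ih (Nat.lt_succ_iff.mp h'))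
      · rw [le_antisymm h h']
  have hchain : IsChain (· ≤ ·) (Set.range T) := by
    rintro _ ⟨n, rfl⟩ _ ⟨m, rfl⟩ -
    rcases le_total n m with h | h
    · exact Or.inr (hTanti' n m h)
    · exact Or.inl (hTanti' m n h)
  have hfin : (Set.range T).Finite := hFCP _ hchain
  haveI := hfin.to_subtype
  obtain ⟨n, m, hnm, heq⟩ := Finite.exists_ne_map_eq_of_infinite
    (fun n : ℕ => (⟨T n, Set.mem_range_self n⟩ : Set.range T))
  have heq' : T n = T m := congrArg Subtype.val heq
  -- wlog n < m, get T (n+1) = T n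
  have hkey : ∃ k : ℕ, T k ≤ T (k + 1) := by
    rcases lt_or_gt_of_ne hnm with h | h
    · exact ⟨n, heq' ▸ hTanti' (n + 1) m h⟩
    · exact ⟨m, heq'.symm ▸ hTanti' (m + 1) n h⟩
  obtain ⟨k, hk⟩ := hkey
  -- the relation : a^k • s ∈ R + (p + (a^(k+1)))S for every s
  have hrel : ∀ s : S, a ^ k • s ∈
      (LinearMap.range (Algebra.linearMap R S) ⊔
        (p ⊔ Ideal.span {a ^ (k+1)}) • (⊤ : Submodule R S) : Submodule R S) := by
    intro s
    have h1 : a ^ k • s ∈ T k := by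
      apply Submodule.mem_sup_right
      exact Submodule.smul_mem_smul (Ideal.mem_sup_right (Ideal.subset_span rfl)) trivial
    exact hk h1
  -- pass to quotient modules
  set M := S ⧸ (LinearMap.range (Algebra.linearMap R S)) with hM
  haveI : Module.Finite R M :=
    Module.Finite.of_surjective (Submodule.mkQ _) (Submodule.mkQ_surjective _)
  set Kp : Submodule R M := p • ⊤ with hKp
  set N := M ⧸ Kp with hN
  haveI : Module.Finite R N :=
    Module.Finite.of_surjective (Submodule.mkQ _) (Submodule.mkQ_surjective _)
  have hrelN : ∀ y : N, a ^ k • y ∈ Ideal.span {a ^ (k+1)} • (⊤ : Submodule R N) := by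
    intro y
    obtain ⟨mm, rfl⟩ := Submodule.mkQ_surjective Kp y
    obtain ⟨s, rfl⟩ := Submodule.mkQ_surjective (LinearMap.range (Algebra.linearMap R S)) mm
    obtain ⟨x₁, hx₁, w, hw, hsum⟩ := Submodule.mem_sup.mp (hrel s)
    -- push to M
    have hM1 : a ^ k • (LinearMap.range (Algebra.linearMap R S)).mkQ s =
        (LinearMap.range (Algebra.linearMap R S)).mkQ w := by
      rw [← map_smul, ← hsum, map_add]
      have : (LinearMap.range (Algebra.linearMap R S)).mkQ x₁ = 0 := by
        rw [Submodule.mkQ_apply, Submodule.Quotient.mk_eq_zero]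
        exact hx₁
      rw [this, zero_add]
    have hwM : (LinearMap.range (Algebra.linearMap R S)).mkQ w ∈
        (p ⊔ Ideal.span {a ^ (k+1)}) • (⊤ : Submodule R M) := by
      have h5 := Submodule.mem_map_of_mem (f := (LinearMap.range (Algebra.linearMap R S)).mkQ) hw
      rw [Submodule.map_smul''] at h5
      exact Submodule.smul_mono le_rfl le_top h5
    rw [Submodule.sup_smul] at hwM
    obtain ⟨u, hu, v, hv, hsum2⟩ := Submodule.mem_sup.mp hwM
    have hfinal : a ^ k • Kp.mkQ ((LinearMap.range (Algebra.linearMap R S)).mkQ s) =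
        Kp.mkQ v := by
      rw [← map_smul, hM1, ← hsum2, map_add]
      have : Kp.mkQ u = 0 := by
        rw [Submodule.mkQ_apply, Submodule.Quotient.mk_eq_zero]
        exact hu
      rw [this, zero_add]
    rw [hfinal]
    have h6 := Submodule.mem_map_of_mem (f := Kp.mkQ) hv
    rw [Submodule.map_smul''] at h6
    exact Submodule.smul_mono le_rfl le_top h6
  -- Nakayama on G = span{a^k} • ⊤
  set G : Submodule R N := Ideal.span {a ^ k} • ⊤ with hG
  have hGeq : G = Submodule.map (LinearMap.lsmul R N (a ^ k)) ⊤ := by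
    apply le_antisymm
    · refine Submodule.smul_le.mpr ?_
      intro r hr y _
      obtain ⟨c, hc⟩ := Ideal.mem_span_singleton'.mp hr
      refine ⟨c • y, trivial, ?_⟩
      rw [LinearMap.lsmul_apply, smul_comm, ← mul_smul, hc]
    · rintro _ ⟨y, -, rfl⟩
      rw [LinearMap.lsmul_apply]
      exact Submodule.smul_mem_smul (Ideal.subset_span rfl) trivial
  have hGfg : G.FG := by
    rw [hGeq]
    exact Submodule.FG.map _ (Module.Finite.fg_top (R := R) (M := N))
  have hGsub : G ≤ Ideal.span {a} • G := by
    refine Submodule.smul_le.mpr ?_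
    intro r hr y _
    obtain ⟨c, hc⟩ := Ideal.mem_span_singleton'.mp hr
    have h1 : a ^ k • y ∈ Ideal.span {a} • G := by
      have h2 := hrelN y
      have h3 : Ideal.span {a ^ (k+1)} • (⊤ : Submodule R N) =
          Ideal.span {a} • G := by
        rw [hG, ← Submodule.smul_assoc, Ideal.smul_eq_mul,
          Ideal.span_singleton_mul_span_singleton, ← pow_succ']
      rw [h3] at h2
      exact h2
    have h4 : r • y = c • (a ^ k • y) := by rw [← mul_smul, hc]
    rw [h4]
    exact Submodule.smul_mem _ c h1
  obtain ⟨rr, hrr1, hrr0⟩ :=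
    Submodule.exists_sub_one_mem_and_smul_eq_zero_of_fg_of_le_smul (Ideal.span {a}) G hGfg hGsub
  set x0 := rr * a ^ k with hx0def
  have hx0 : ∀ mm : M, x0 • mm ∈ Kp := by
    intro mm
    have h1 : Kp.mkQ (x0 • mm) = 0 := by
      rw [map_smul, hx0def, mul_smul]
      apply hrr0
      exact Submodule.smul_mem_smul (Ideal.subset_span rfl) trivial
    rwa [Submodule.mkQ_apply, Submodule.Quotient.mk_eq_zero] at h1
  -- Cayley-Hamilton
  set φ := algebraMap R (Module.End R M) x0 with hφ
  have hφrange : LinearMap.range φ ≤ p • (⊤ : Submodule R M) := by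
    rintro _ ⟨mm, rfl⟩
    rw [hφ, Module.algebraMap_end_apply]
    exact hx0 mm
  obtain ⟨fp, hmonic, -, hcoeff, heval⟩ :=
    LinearMap.exists_monic_and_coeff_mem_pow_and_aeval_eq_zero_of_range_le_smul R φ p hφrange
  have heval' : algebraMap R (Module.End R M) (fp.eval x0) = 0 := by
    rw [← Polynomial.aeval_algebraMap_apply_eq_algebraMap_eval, ← hφ]
    exact heval
  have hcond' : fp.eval x0 ∈ condIdeal R S := by
    intro s
    have h1 : (fp.eval x0) • ((LinearMap.range (Algebra.linearMap R S)).mkQ s) = 0 := by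
      have h2 := congrFun (congrArg DFunLike.coe heval')
        ((LinearMap.range (Algebra.linearMap R S)).mkQ s)
      rwa [Module.algebraMap_end_apply, LinearMap.zero_apply] at h2
    rw [← map_smul, Submodule.mkQ_apply, Submodule.Quotient.mk_eq_zero] at h1
    obtain ⟨y, hy⟩ := h1
    rw [Algebra.mem_bot]
    refine ⟨y, ?_⟩
    rw [← Algebra.smul_def, ← Algebra.linearMap_apply, hy]
  have hevalp : fp.eval x0 ∈ p := hcond hcond'
  -- conclude x0 ^ deg ∈ p
  set d := fp.natDegree with hd
  have hsum : fp.eval x0 = (∑ i ∈ Finset.range d, fp.coeff i * x0 ^ i) + x0 ^ d := by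
    rw [Polynomial.eval_eq_sum_range, Finset.sum_range_succ, hmonic.coeff_natDegree, one_mul]
  have hsump : (∑ i ∈ Finset.range d, fp.coeff i * x0 ^ i) ∈ p := by
    apply Ideal.sum_mem
    intro i hi
    apply Ideal.mul_mem_right
    have := hcoeff i
    have hipos : d - i ≠ 0 := by
      rw [Finset.mem_range] at hi
      omega
    exact Ideal.pow_le_self hipos this
  have hx0d : x0 ^ d ∈ p := by
    have : x0 ^ d = fp.eval x0 - (∑ i ∈ Finset.range d, fp.coeff i * x0 ^ i) := by
      rw [hsum]; ring
    rw [this]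
    exact p.sub_mem hevalp hsump
  have hx0p : x0 ∈ p := hp.mem_of_pow_mem d hx0d
  have hrrp : rr ∈ p := by
    rcases hp.mem_or_mem hx0p with h | h
    · exact h
    · exact absurd (hp.mem_of_pow_mem k h) hap
  -- contradiction : 1 ∈ q
  have hrr1q : rr - 1 ∈ q := by
    have hspanq : Ideal.span {a} ≤ q := by
      rw [Ideal.span_singleton_le_iff_mem]; exact haq
    exact hspanq hrr1
  have h1q : (1 : R) ∈ q := by
    have h2 := q.sub_mem (hpq hrrp) hrr1q
    simpa using h2
  exact hq.ne_top (Ideal.eq_top_of_isUnit_mem _ h1q isUnit_one)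
end PartTwo

section PartTwoB
variable {R S : Type*} [CommRing R] [CommRing S] [Algebra R S]

/-- Incomparability over the conductor. -/
lemma primes_incomp
    (hFCP : ∀ C : Set (Subalgebra R S), IsChain (· ≤ ·) C → C.Finite)
    [Module.Finite R S] [Algebra.IsIntegral R S] {q Q : Ideal S}
    (hq : q.IsPrime) (hQ : Q.IsPrime) (hle : q ≤ Q)
    (hcond : condIdeal R S ≤ q.comap (algebraMap R S)) : q = Q := by
  by_contra hne
  obtain ⟨x, hxQ, hxq⟩ := SetLike.exists_of_lt (lt_of_le_of_ne hle hne)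
  haveI := hq
  have hlt := Ideal.comap_lt_comap_of_integral_mem_sdiff (R := R) hle ⟨hxQ, hxq⟩
    (Algebra.IsIntegral.isIntegral x)
  haveI : (q.comap (algebraMap R S)).IsPrime := Ideal.IsPrime.comap _
  haveI : (Q.comap (algebraMap R S)).IsPrime := Ideal.IsPrime.comap _
  exact hlt.ne (dim0_of_fcp hFCP ‹(q.comap (algebraMap R S)).IsPrime›
    ‹(Q.comap (algebraMap R S)).IsPrime› hcond hlt.le)

set_option maxHeartbeats 1000000 in
/-- From non-injectivity of Spec we produce an "idempotent mod conductor" outside `R`. -/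
lemma exists_bad
    (hFCP : ∀ C : Set (Subalgebra R S), IsChain (· ≤ ·) C → C.Finite)
    [Algebra.IsIntegral R S] {Q₁ Q₂ : Ideal S}
    (h₁ : Q₁.IsPrime) (h₂ : Q₂.IsPrime)
    (hc : Q₁.comap (algebraMap R S) = Q₂.comap (algebraMap R S)) (hne : Q₁ ≠ Q₂) :
    ∃ b : S, b ∉ (⊥ : Subalgebra R S) ∧ b ^ 2 - b ∈ (⊥ : Subalgebra R S) ∧
      (∀ s : S, s * (b ^ 2 - b) ∈ (⊥ : Subalgebra R S)) := by
  haveI : Module.Finite R S := finite_of_fcp hFCP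
  have hcond1 : condIdeal R S ≤ Q₁.comap (algebraMap R S) := cond_le_comap h₁ h₂ hc hne
  have hcond2 : condIdeal R S ≤ Q₂.comap (algebraMap R S) := hc ▸ hcond1
  have hCS1 : condS R S ≤ Q₁ := Ideal.map_le_iff_le_comap.mpr hcond1
  have hCS2 : condS R S ≤ Q₂ := Ideal.map_le_iff_le_comap.mpr hcond2
  -- quotient by the conductor
  set B := S ⧸ condS R S with hB
  set π : S →+* B := Ideal.Quotient.mk (condS R S) with hπ
  have hπsurj : Function.Surjective π := Ideal.Quotient.mk_surjective
  have hπker : RingHom.ker π = condS R S := Ideal.mk_ker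
  set Qb₁ : Ideal B := Q₁.map π with hQb₁
  set Qb₂ : Ideal B := Q₂.map π with hQb₂
  haveI := h₁
  haveI := h₂
  have hQb₁p : Qb₁.IsPrime :=
    Ideal.map_isPrime_of_surjective hπsurj (by rw [hπker]; exact hCS1)
  have hQb₂p : Qb₂.IsPrime :=
    Ideal.map_isPrime_of_surjective hπsurj (by rw [hπker]; exact hCS2)
  have hQb₁c : Qb₁.comap π = Q₁ := by
    rw [hQb₁, Ideal.comap_map_of_surjective π hπsurj, sup_eq_left.mpr]
    rw [← RingHom.ker_eq_comap_bot, hπker]; exact hCS1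
  have hQb₂c : Qb₂.comap π = Q₂ := by
    rw [hQb₂, Ideal.comap_map_of_surjective π hπsurj, sup_eq_left.mpr]
    rw [← RingHom.ker_eq_comap_bot, hπker]; exact hCS2
  -- quotient by the nilradical
  set B₀ := B ⧸ nilradical B with hB₀
  set π₀ : B →+* B₀ := Ideal.Quotient.mk (nilradical B) with hπ₀
  have hπ₀surj : Function.Surjective π₀ := Ideal.Quotient.mk_surjective
  have hπ₀ker : RingHom.ker π₀ = nilradical B := Ideal.mk_ker
  haveI : IsReduced B₀ := by
    have h := (Ideal.isRadical_iff_quotient_reduced (nilradical B)).mp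
    exact h (Ideal.radical_isRadical (⊥ : Ideal B))
  set Qt₁ : Ideal B₀ := Qb₁.map π₀ with hQt₁
  set Qt₂ : Ideal B₀ := Qb₂.map π₀ with hQt₂
  have hnil1 : nilradical B ≤ Qb₁ := nilradical_le_prime Qb₁
  have hnil2 : nilradical B ≤ Qb₂ := nilradical_le_prime Qb₂
  haveI := hQb₁p
  haveI := hQb₂p
  have hQt₁p : Qt₁.IsPrime :=
    Ideal.map_isPrime_of_surjective hπ₀surj (by rw [hπ₀ker]; exact hnil1)
  have hQt₂p : Qt₂.IsPrime :=
    Ideal.map_isPrime_of_surjective hπ₀surj (by rw [hπ₀ker]; exact hnil2)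
  have hQt₁c : Qt₁.comap π₀ = Qb₁ := by
    rw [hQt₁, Ideal.comap_map_of_surjective π₀ hπ₀surj, sup_eq_left.mpr]
    rw [← RingHom.ker_eq_comap_bot, hπ₀ker]; exact hnil1
  have hQt₂c : Qt₂.comap π₀ = Qb₂ := by
    rw [hQt₂, Ideal.comap_map_of_surjective π₀ hπ₀surj, sup_eq_left.mpr]
    rw [← RingHom.ker_eq_comap_bot, hπ₀ker]; exact hnil2
  -- every prime of B₀ is both minimal and maximal among primes
  have hmin : ∀ 𝔮 𝔪 : Ideal B₀, 𝔮.IsPrime → 𝔪.IsPrime → 𝔮 ≤ 𝔪 → 𝔮 = 𝔪 := by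
    intro 𝔮 𝔪 h𝔮 h𝔪 hle
    have hsurj2 : Function.Surjective (π₀.comp π) := hπ₀surj.comp hπsurj
    set q' := (𝔮.comap (π₀.comp π) : Ideal S) with hq'
    set m' := (𝔪.comap (π₀.comp π) : Ideal S) with hm'
    haveI := h𝔮
    haveI := h𝔪
    haveI hq'p : q'.IsPrime := Ideal.IsPrime.comap _
    haveI hm'p : m'.IsPrime := Ideal.IsPrime.comap _
    have hq'm' : q' ≤ m' := Ideal.comap_mono hle
    have hCSq' : condS R S ≤ q' := by
      intro x hx
      have : (π₀.comp π) x = 0 := by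
        have hx' : π x = 0 := by
          rw [← RingHom.mem_ker, hπker]; exact hx
        rw [RingHom.comp_apply, hx', map_zero]
      rw [hq', Ideal.mem_comap, this]
      exact 𝔮.zero_mem
    have hcondq' : condIdeal R S ≤ q'.comap (algebraMap R S) := by
      intro r hr
      rw [Ideal.mem_comap]
      exact hCSq' (Ideal.mem_map_of_mem _ hr)
    have heq' : q' = m' := primes_incomp hFCP hq'p hm'p hq'm' hcondq'
    have h1 : (q'.map (π₀.comp π) : Ideal B₀) = 𝔮 :=
      Ideal.map_comap_of_surjective _ hsurj2 𝔮
    have h2 : (m'.map (π₀.comp π) : Ideal B₀) = 𝔪 :=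
      Ideal.map_comap_of_surjective _ hsurj2 𝔪
    rw [← h1, ← h2, heq']
  -- pick a₀ ∈ Q₁ \ Q₂ and push it to B₀
  have hQ₁nleQ₂ : ¬(Q₁ ≤ Q₂) := fun hle => hne (primes_incomp hFCP h₁ h₂ hle hcond1)
  obtain ⟨a₀, ha₀Q₁, ha₀Q₂⟩ := SetLike.not_le_iff_exists.mp hQ₁nleQ₂
  set abar := π₀ (π a₀) with habar
  have habarQ₁ : abar ∈ Qt₁ := Ideal.mem_map_of_mem _ (Ideal.mem_map_of_mem _ ha₀Q₁)
  have habarQ₂ : abar ∉ Qt₂ := by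
    intro hmem
    have h1 : π a₀ ∈ Qb₂ := by rw [← hQt₂c]; exact hmem
    have h2 : a₀ ∈ Q₂ := by rw [← hQb₂c]; exact h1
    exact ha₀Q₂ h2
  -- the annihilator of abar
  set Ann : Ideal B₀ :=
    { carrier := {t : B₀ | t * abar = 0}
      add_mem' := fun hx hy => by
        simp only [Set.mem_setOf_eq] at *
        rw [add_mul, hx, hy, add_zero]
      zero_mem' := by simp
      smul_mem' := fun c x hx => by
        simp only [Set.mem_setOf_eq, smul_eq_mul] at *
        rw [mul_assoc, hx, mul_zero] } with hAnn
  -- span{abar} ⊔ Ann = ⊤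
  have hsplit : Ideal.span {abar} ⊔ Ann = ⊤ := by
    by_contra hne'
    obtain ⟨𝔪, h𝔪max, h𝔪le⟩ := Ideal.exists_le_maximal _ hne'
    have h𝔪p : 𝔪.IsPrime := h𝔪max.isPrime
    set TT : Submonoid B₀ :=
      { carrier := {x : B₀ | ∃ s, s ∉ 𝔪 ∧ ∃ k : ℕ, x = s * abar ^ k}
        one_mem' := ⟨1, fun h => h𝔪max.ne_top ((Ideal.eq_top_iff_one _).mpr h), 0, by simp⟩
        mul_mem' := by
          rintro x y ⟨s, hs, k, rfl⟩ ⟨s', hs', k', rfl⟩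
          refine ⟨s * s', fun h => ?_, k + k', by ring⟩
          rcases h𝔪p.mem_or_mem h with h | h
          · exact hs h
          · exact hs' h } with hTT
    by_cases h0 : (0 : B₀) ∈ TT
    · obtain ⟨s, hs, k, hk⟩ := h0
      have hnil : (s * abar) ^ (k + 1) = 0 := by
        have : (s * abar) ^ (k + 1) = (s * abar ^ k) * (s ^ k * abar) := by ring
        rw [this, ← hk, zero_mul]
      have hzero : s * abar = 0 := IsReduced.eq_zero _ ⟨k + 1, hnil⟩
      have : s ∈ Ann := hzero
      exact hs (h𝔪le (Ideal.mem_sup_right this))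
    · have hdisj : Disjoint ((⊥ : Ideal B₀) : Set B₀) (TT : Set B₀) := by
        rw [Set.disjoint_left]
        intro x hx hxT
        rw [SetLike.mem_coe, Ideal.mem_bot] at hx
        rw [hx] at hxT
        exact h0 hxT
      obtain ⟨𝔮, h𝔮p, -, h𝔮d⟩ := Ideal.exists_le_prime_disjoint _ TT hdisj
      have h𝔮𝔪 : 𝔮 ≤ 𝔪 := by
        intro x hx
        by_contra hx𝔪
        exact Set.disjoint_left.mp h𝔮d hx ⟨x, hx𝔪, 0, by simp⟩
      have h𝔮eq : 𝔮 = 𝔪 := hmin _ _ h𝔮p h𝔪p h𝔮𝔪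
      have habar𝔮 : abar ∉ 𝔮 := fun h =>
        Set.disjoint_left.mp h𝔮d h ⟨1, fun h' => h𝔪max.ne_top ((Ideal.eq_top_iff_one _).mpr h'),
          1, by simp⟩
      have habar𝔪 : abar ∈ 𝔪 := h𝔪le (Ideal.mem_sup_left (Ideal.subset_span rfl))
      rw [h𝔮eq] at habar𝔮
      exact habar𝔮 habar𝔪
  -- decompose 1
  have h1mem : (1 : B₀) ∈ Ideal.span {abar} ⊔ Ann := by rw [hsplit]; trivial
  obtain ⟨y, hy, cc, hcc, hsum⟩ := Submodule.mem_sup.mp h1mem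
  obtain ⟨t, ht⟩ := Ideal.mem_span_singleton'.mp hy
  have hccA : cc * abar = 0 := hcc
  have hsum' : t * abar + cc = 1 := by rw [ht]; exact hsum
  set e₀ := t * abar with he₀def
  have he₀idem : e₀ * e₀ = e₀ := by
    rw [he₀def]
    linear_combination (t * abar) * hsum' - t * hccA
  have he₀Q₁ : e₀ ∈ Qt₁ := Ideal.mul_mem_left _ t habarQ₁
  have he₀Q₂ : e₀ ∉ Qt₂ := by
    intro hmem
    have habar_e : abar = abar * e₀ := by
      rw [he₀def]
      linear_combination (-abar) * hsum' + hccA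
    have : abar ∈ Qt₂ := by rw [habar_e]; exact Ideal.mul_mem_left _ _ hmem
    exact habarQ₂ this
  -- lift e₀ to B and correct it with Newton's lemma
  obtain ⟨x, hx⟩ := hπ₀surj e₀
  have hznil : IsNilpotent (x ^ 2 - x) := by
    rw [← mem_nilradical]
    have : π₀ (x ^ 2 - x) = 0 := by
      rw [map_sub, map_pow, hx, pow_two, he₀idem, sub_self]
    rwa [← hπ₀ker, RingHom.mem_ker]
  obtain ⟨k, hk⟩ := hznil
  obtain ⟨e, he, hex⟩ := newton_idem k x hk
  have hspan_nil : Ideal.span {x ^ 2 - x} ≤ nilradical B := by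
    rw [Ideal.span_le]
    intro z hz
    rw [Set.mem_singleton_iff] at hz
    rw [SetLike.mem_coe, mem_nilradical, hz]
    exact ⟨k, hk⟩
  have hex_nil : e - x ∈ nilradical B := hspan_nil hex
  have hπ₀e : π₀ e = e₀ := by
    have h1 : π₀ (e - x) = 0 := by
      have h3 := hex_nil
      rw [← hπ₀ker] at h3
      exact h3
    have h2 : π₀ e - π₀ x = 0 := by rw [← map_sub]; exact h1
    rw [← hx]
    exact sub_eq_zero.mp h2
  have heQb₁ : e ∈ Qb₁ := by
    rw [← hQt₁c, Ideal.mem_comap, hπ₀e]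
    exact he₀Q₁
  have heQb₂ : e ∉ Qb₂ := by
    intro hmem
    have : π₀ e ∈ Qt₂ := Ideal.mem_map_of_mem _ hmem
    rw [hπ₀e] at this
    exact he₀Q₂ this
  -- lift e to S
  obtain ⟨b, hb⟩ := hπsurj e
  have hbCS : b ^ 2 - b ∈ condS R S := by
    rw [← hπker, RingHom.mem_ker, map_sub, map_pow, hb, pow_two, he, sub_self]
  refine ⟨b, ?_, condS_le_bot _ hbCS, fun s => condS_absorb _ hbCS s⟩
  -- b ∉ ⊥
  intro hbbot
  obtain ⟨w, hw⟩ := Algebra.mem_bot.mp hbbot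
  have hbQ₁ : b ∈ Q₁ := by
    rw [← hQb₁c, Ideal.mem_comap, hb]
    exact heQb₁
  have hbQ₂ : b ∉ Q₂ := by
    intro hmem
    have : π b ∈ Qb₂ := Ideal.mem_map_of_mem _ hmem
    rw [hb] at this
    exact heQb₂ this
  have hwQ₁ : w ∈ Q₁.comap (algebraMap R S) := by
    rw [Ideal.mem_comap, hw]
    exact hbQ₁
  rw [hc] at hwQ₁
  have : b ∈ Q₂ := by rw [← hw]; exact hwQ₁
  exact hbQ₂ this

end PartTwoB

section PartThree
variable {R S : Type*} [CommRing R] [CommRing S] [Algebra R S]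

lemma bad_in_tc {b : S} (h2 : b ^ 2 - b ∈ (⊥ : Subalgebra R S))
    (h3 : b ^ 3 - b ^ 2 ∈ (⊥ : Subalgebra R S)) :
    b ∈ sInf {T : Subalgebra R S | IsTClosedIn T} := by
  rw [Algebra.mem_sInf]
  intro T hT
  refine hT b ⟨1, T.one_mem, ?_, ?_⟩
  · simpa using (bot_le : (⊥ : Subalgebra R S) ≤ T) h2
  · simpa using (bot_le : (⊥ : Subalgebra R S) ≤ T) h3

lemma bad_not_in_sn
    (hFCP : ∀ C : Set (Subalgebra R S), IsChain (· ≤ ·) C → C.Finite)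
    {b : S} (hb : b ∉ (⊥ : Subalgebra R S)) (h2 : b ^ 2 - b ∈ (⊥ : Subalgebra R S))
    (habs : ∀ s : S, s * (b ^ 2 - b) ∈ (⊥ : Subalgebra R S)) :
    b ∉ sInf {T : Subalgebra R S | IsSeminormalIn T} := by
  obtain ⟨T, hTmem, hTmax⟩ := HasFCP.exists_max hFCP (s := {T : Subalgebra R S | b ∉ T})
    ⟨⊥, hb⟩
  intro hbmem
  rw [Algebra.mem_sInf] at hbmem
  have hζT : b ^ 2 - b ∈ T := (bot_le : (⊥ : Subalgebra R S) ≤ T) h2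
  have hbζT : b * (b ^ 2 - b) ∈ T := (bot_le : (⊥ : Subalgebra R S) ≤ T) (habs b)
  have hTsn : IsSeminormalIn T := by
    intro c hc2 hc3
    by_contra hc
    -- the subalgebra T + Tc
    let Tc : Subalgebra R S :=
      { carrier := {x : S | ∃ t₀ ∈ T, ∃ t₁ ∈ T, x = t₀ + t₁ * c}
        mul_mem' := by
          rintro x y ⟨t₀, ht₀, t₁, ht₁, rfl⟩ ⟨s₀, hs₀, s₁, hs₁, rfl⟩
          exact ⟨t₀ * s₀ + t₁ * s₁ * c ^ 2, T.add_mem (T.mul_mem ht₀ hs₀)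
              (T.mul_mem (T.mul_mem ht₁ hs₁) hc2),
            t₀ * s₁ + t₁ * s₀, T.add_mem (T.mul_mem ht₀ hs₁) (T.mul_mem ht₁ hs₀), by ring⟩
        add_mem' := by
          rintro x y ⟨t₀, ht₀, t₁, ht₁, rfl⟩ ⟨s₀, hs₀, s₁, hs₁, rfl⟩
          exact ⟨t₀ + s₀, T.add_mem ht₀ hs₀, t₁ + s₁, T.add_mem ht₁ hs₁, by ring⟩
        one_mem' := ⟨1, T.one_mem, 0, T.zero_mem, by ring⟩
        zero_mem' := ⟨0, T.zero_mem, 0, T.zero_mem, by ring⟩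
        algebraMap_mem' := fun r =>
          ⟨algebraMap R S r, T.algebraMap_mem r, 0, T.zero_mem, by ring⟩ }
    have hTle : T ≤ Tc := fun t ht => ⟨t, ht, 0, T.zero_mem, by ring⟩
    have hcTc : c ∈ Tc := ⟨0, T.zero_mem, 1, T.one_mem, by ring⟩
    have hbTc : b ∈ Tc := by
      by_contra hbTc
      have := hTmax Tc hbTc hTle
      rw [← this] at hc
      exact hc hcTc
    obtain ⟨t₀, ht₀, t₁, ht₁, hbeq⟩ := hbTc
    -- now extract t₁ * c ∈ T
    have hA1 : (2 * t₀ * t₁ - t₁) * c ∈ T := by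
      have heq : (2 * t₀ * t₁ - t₁) * c =
          t₀ + (b ^ 2 - b) - t₀ ^ 2 - t₁ * t₁ * c ^ 2 := by
        rw [hbeq]; ring
      rw [heq]
      exact T.sub_mem (T.sub_mem (T.add_mem ht₀ hζT) (T.pow_mem ht₀ 2))
        (T.mul_mem (T.mul_mem ht₁ ht₁) hc2)
    have hA2 : (3 * t₀ ^ 2 * t₁ - t₁) * c ∈ T := by
      have heq : (3 * t₀ ^ 2 * t₁ - t₁) * c =
          t₀ + (b ^ 2 - b) + b * (b ^ 2 - b) - t₀ ^ 3 -
            3 * t₀ * (t₁ * t₁) * c ^ 2 - t₁ * (t₁ * t₁) * c ^ 3 := by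
        rw [hbeq]; ring
      rw [heq]
      refine T.sub_mem (T.sub_mem (T.sub_mem (T.add_mem (T.add_mem ht₀ hζT) hbζT)
        (T.pow_mem ht₀ 3)) ?_) ?_
      · exact T.mul_mem (T.mul_mem (T.mul_mem (T.natCast_mem 3) ht₀) (T.mul_mem ht₁ ht₁)) hc2
      · exact T.mul_mem (T.mul_mem ht₁ (T.mul_mem ht₁ ht₁)) hc3
    have ht₁c : t₁ * c ∈ T := by
      have heq : t₁ * c = (6 * t₀ + 3) * ((2 * t₀ * t₁ - t₁) * c) -
          4 * ((3 * t₀ ^ 2 * t₁ - t₁) * c) := by ring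
      rw [heq]
      refine T.sub_mem (T.mul_mem ?_ hA1) (T.mul_mem (T.natCast_mem 4) hA2)
      exact T.add_mem (T.mul_mem (T.natCast_mem 6) ht₀) (T.natCast_mem 3)
    apply hTmem
    rw [hbeq]
    exact T.add_mem ht₀ ht₁c
  exact hTmem (hbmem T hTsn)

end PartThree

/-- Let `R ⊂ S` be an integral FCP extension.  The following are
equivalent: (1) `R` is u-closed in `S`; (2) `Spec S → Spec R` is injective; (3) the
seminormalization of `R` in `S` (the smallest seminormal intermediate ring, i.e. the
intersection of all of them) equals the t-closure of `R` in `S`. -/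
theorem stmt6 {R S : Type*} [CommRing R] [CommRing S] [Algebra R S]
    (hinj : Function.Injective (algebraMap R S))
    (hproper : (⊥ : Subalgebra R S) ≠ ⊤)
    (hFCP : Algebra.HasFCP R S)
    (hint : Algebra.IsIntegral R S) :
    (IsUClosedIn (⊥ : Subalgebra R S) ↔
      Function.Injective fun Q : PrimeSpectrum S => PrimeSpectrum.comap (algebraMap R S) Q) ∧
    (IsUClosedIn (⊥ : Subalgebra R S) ↔
      sInf {T : Subalgebra R S | IsSeminormalIn T} =
        sInf {T : Subalgebra R S | IsTClosedIn T}) := by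
  haveI := hint
  have hFCP' : ∀ C : Set (Subalgebra R S), IsChain (· ≤ ·) C → C.Finite := hFCP
  -- conversion between the two forms of Spec-injectivity
  have hspec_of : (Function.Injective fun Q : PrimeSpectrum S =>
        PrimeSpectrum.comap (algebraMap R S) Q) →
      ∀ Q₁ Q₂ : Ideal S, Q₁.IsPrime → Q₂.IsPrime →
        Q₁.comap (algebraMap R S) = Q₂.comap (algebraMap R S) → Q₁ = Q₂ := by
    intro hinjPS Q₁ Q₂ hp1 hp2 hcq
    have h := hinjPS (a₁ := ⟨Q₁, hp1⟩) (a₂ := ⟨Q₂, hp2⟩) (by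
      apply PrimeSpectrum.ext
      rw [PrimeSpectrum.comap_asIdeal, PrimeSpectrum.comap_asIdeal]
      exact hcq)
    exact congrArg PrimeSpectrum.asIdeal h
  -- ¬Injective gives the bad element
  have hbad_of : ¬(Function.Injective fun Q : PrimeSpectrum S =>
        PrimeSpectrum.comap (algebraMap R S) Q) →
      ∃ b : S, b ∉ (⊥ : Subalgebra R S) ∧ b ^ 2 - b ∈ (⊥ : Subalgebra R S) ∧
        (∀ s : S, s * (b ^ 2 - b) ∈ (⊥ : Subalgebra R S)) := by
    intro hninj
    obtain ⟨Q₁, Q₂, hcq, hne⟩ := Function.not_injective_iff.mp hninj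
    refine exists_bad hFCP' Q₁.isPrime Q₂.isPrime ?_ ?_
    · have := congrArg PrimeSpectrum.asIdeal hcq
      rwa [PrimeSpectrum.comap_asIdeal, PrimeSpectrum.comap_asIdeal] at this
    · intro h
      exact hne (PrimeSpectrum.ext h)
  have E12 : IsUClosedIn (⊥ : Subalgebra R S) ↔
      Function.Injective fun Q : PrimeSpectrum S =>
        PrimeSpectrum.comap (algebraMap R S) Q := by
    constructor
    · intro hU
      by_contra hninj
      obtain ⟨b, hb, h2, habs⟩ := hbad_of hninj
      have h3 : b ^ 3 - b ^ 2 ∈ (⊥ : Subalgebra R S) := by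
        have h4 := habs b
        rwa [show b * (b ^ 2 - b) = b ^ 3 - b ^ 2 by ring] at h4
      exact hb (hU b h2 h3)
    · intro hinjPS
      exact uclosed_of_spec hinj (hspec_of hinjPS)
  refine ⟨E12, ?_⟩
  constructor
  · intro hU
    have hspec := hspec_of (E12.mp hU)
    exact le_antisymm sInf_sn_le_sInf_tc (sInf_le (sn_tclosed_of_spec hinj hspec))
  · intro heq
    by_contra hU
    have hninj : ¬(Function.Injective fun Q : PrimeSpectrum S =>
        PrimeSpectrum.comap (algebraMap R S) Q) :=
      fun hinjPS => hU (uclosed_of_spec hinj (hspec_of hinjPS))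
    obtain ⟨b, hb, h2, habs⟩ := hbad_of hninj
    have h3 : b ^ 3 - b ^ 2 ∈ (⊥ : Subalgebra R S) := by
      have h4 := habs b
      rwa [show b * (b ^ 2 - b) = b ^ 3 - b ^ 2 by ring] at h4
    have hTC : b ∈ sInf {T : Subalgebra R S | IsTClosedIn T} := bad_in_tc h2 h3
    have hSN : b ∉ sInf {T : Subalgebra R S | IsSeminormalIn T} := bad_not_in_sn hFCP' hb h2 habs
    rw [heq] at hSN
    exact hSN hTC
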